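/- Let r ∈ ℕ, let n be fixed, and let (a_{n,k})_{k≥0} be nonnegative real numbers with lim_{k→∞} a_{n,k} = 0 and ∑_{k=0}^∞ a_{n,k} = 1. If t ∈ ℝ satisfies t ≠ 2lπ/r for every integer l, then |∑_{k=0}^∞ a_{n,k} D°_{k,1}(t)| ≤ (1/(2|sin(t/2) sin(rt/2)|)) (A_{n,r} + ∑_{k=0}^{r−1} a_{n,k}) ≤ A_{n,r}/|sin(t/2) sin(rt/2)|, where A_{n,r} = ∑_{k=0}^∞ |a_{n,k} − a_{n,k+r}|. -/

import Mathlib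

open Real Filter

noncomputable section

/-- The kernel `D°_{k,ρ}(t) = sin((2k+ρ)t/2) / (2 sin(ρt/2))`. -/
def Dker (k : ℕ) (ρ : ℤ) (t : ℝ) : ℝ :=
  Real.sin ((2 * (k : ℝ) + (ρ : ℝ)) * t / 2) / (2 * Real.sin ((ρ : ℝ) * t / 2))

set_option maxHeartbeats 1000000 in
/-- **Lemma 4.** Bound on the `A`-transform of the Dirichlet kernels by
`r`-differences of the entries. -/
theorem lemma_four (r : ℕ) (hr : 1 ≤ r) (a : ℕ → ℝ) (ha0 : ∀ k, 0 ≤ a k)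
    (halim : Tendsto a atTop (nhds 0)) (hasum : HasSum a 1) (t : ℝ)
    (ht : ∀ l : ℤ, t ≠ 2 * (l : ℝ) * π / (r : ℝ)) :
    |∑' k : ℕ, a k * Dker k 1 t|
        ≤ (1 / (2 * |Real.sin (t / 2) * Real.sin ((r : ℝ) * t / 2)|)) *
            ((∑' k : ℕ, |a k - a (k + r)|) + ∑ k ∈ Finset.range r, a k)
      ∧ (1 / (2 * |Real.sin (t / 2) * Real.sin ((r : ℝ) * t / 2)|)) *
            ((∑' k : ℕ, |a k - a (k + r)|) + ∑ k ∈ Finset.range r, a k)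
          ≤ (∑' k : ℕ, |a k - a (k + r)|) /
              |Real.sin (t / 2) * Real.sin ((r : ℝ) * t / 2)| := by
  have hr0 : 0 < r := hr
  have hrR : (0:ℝ) < r := by exact_mod_cast hr0
  -- nonvanishing of the two sines
  have hs2 : Real.sin ((r:ℝ) * t / 2) ≠ 0 := by
    intro h
    obtain ⟨l, hl⟩ := Real.sin_eq_zero_iff.mp h
    exact ht l (by field_simp at hl ⊢; linarith)
  have hs1 : Real.sin (t / 2) ≠ 0 := by
    intro h
    obtain ⟨l, hl⟩ := Real.sin_eq_zero_iff.mp h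
    refine ht (l * r) ?_
    push_cast
    field_simp at hl ⊢
    nlinarith [hl]
  set s1 : ℝ := Real.sin (t / 2) with hs1def
  set s2 : ℝ := Real.sin ((r:ℝ) * t / 2) with hs2def
  have habs1 : 0 < |s1| := abs_pos.mpr hs1
  have habs2 : 0 < |s2| := abs_pos.mpr hs2
  -- the sine sequence and the grouped partial kernels
  set s : ℕ → ℝ := fun k => Real.sin ((2 * (k:ℝ) + 1) * t / 2) with hsdef
  set T : ℕ → ℝ := fun k => ∑ j ∈ Finset.range (k / r + 1), s (k - j * r) with hTdef
  set T' : ℕ → ℝ := fun k => if k < r then 0 else T (k - r) with hT'def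
  -- product-to-difference identity
  have key : ∀ x y : ℝ, Real.cos (x - y) - Real.cos (x + y) = 2 * Real.sin x * Real.sin y := by
    intro x y; rw [Real.cos_sub, Real.cos_add]; ring
  -- bound on T
  have hTb : ∀ k, |T k| ≤ 1 / |s2| := by
    intro k
    set c : ℕ → ℝ := fun j => Real.cos ((2 * (k:ℝ) + 1) * t / 2 + (r:ℝ) * t / 2 - (j:ℝ) * ((r:ℝ) * t)) with hcdef
    have h2 : 2 * s2 * T k = c (k / r + 1) - c 0 := by
      rw [hTdef]
      simp only
      rw [Finset.mul_sum, ← Finset.sum_range_sub c]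
      refine Finset.sum_congr rfl fun j hj => ?_
      have hjle : j ≤ k / r := Nat.lt_succ_iff.mp (Finset.mem_range.mp hj)
      have hjr : j * r ≤ k := Nat.le_div_iff_mul_le hr0 |>.mp hjle
      have hc : ((k - j * r : ℕ) : ℝ) = (k:ℝ) - (j:ℝ) * (r:ℝ) := by
        push_cast [hjr]; ring
      have hx := key ((2 * (k:ℝ) + 1) * t / 2 - (j:ℝ) * ((r:ℝ) * t)) ((r:ℝ) * t / 2)
      simp only [hsdef, hcdef, hc]
      push_cast
      rw [show (2 * ((k:ℝ) - (j:ℝ) * (r:ℝ)) + 1) * t / 2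
            = (2 * (k:ℝ) + 1) * t / 2 - (j:ℝ) * ((r:ℝ) * t) by ring]
      rw [show (2 * (k:ℝ) + 1) * t / 2 + (r:ℝ) * t / 2 - ((j:ℝ) + 1) * ((r:ℝ) * t)
            = (2 * (k:ℝ) + 1) * t / 2 - (j:ℝ) * ((r:ℝ) * t) - (r:ℝ) * t / 2 by ring]
      rw [show (2 * (k:ℝ) + 1) * t / 2 + (r:ℝ) * t / 2 - (j:ℝ) * ((r:ℝ) * t)
            = (2 * (k:ℝ) + 1) * t / 2 - (j:ℝ) * ((r:ℝ) * t) + (r:ℝ) * t / 2 by ring]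
      linarith [hx]
    have hb : |2 * s2 * T k| ≤ 2 := by
      rw [h2]
      calc |c (k / r + 1) - c 0| ≤ |c (k / r + 1)| + |c 0| := abs_sub _ _
        _ ≤ 1 + 1 := add_le_add (Real.abs_cos_le_one _) (Real.abs_cos_le_one _)
        _ = 2 := by norm_num
    rw [abs_mul, abs_mul, abs_two] at hb
    rw [le_div_iff₀ habs2]
    nlinarith [abs_nonneg (T k)]
  have hT'b : ∀ k, |T' k| ≤ 1 / |s2| := by
    intro k
    rw [hT'def]
    simp only
    split
    · simpa using le_of_lt (div_pos one_pos habs2)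
    · exact hTb _
  -- recurrence : s k = T k - T' k
  have hrec : ∀ k, s k = T k - T' k := by
    intro k
    rw [hT'def]
    simp only
    split
    · rename_i hk
      rw [hTdef]; simp [Nat.div_eq_of_lt hk]
    · rename_i hk
      push_neg at hk
      have hkd : k / r = (k - r) / r + 1 := by
        conv_lhs => rw [show k = k - r + r by omega]
        rw [Nat.add_div_right _ hr0]
      have : T k = (∑ j ∈ Finset.range ((k - r) / r + 1), s (k - (j + 1) * r)) + s k := by
        rw [hTdef]
        simp only
        rw [hkd, Finset.sum_range_succ' (fun j => s (k - j * r))]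
        simp
      rw [this, hTdef]
      simp only
      have : ∀ j, k - (j + 1) * r = k - r - j * r := by
        intro j; rw [add_mul, one_mul]; omega
      simp only [this]
      ring
  -- summability facts
  have hsa : Summable a := hasum.summable
  have hsar : Summable (fun k => a (k + r)) := hsa.comp_injective (add_left_injective r)
  have hd : Summable (fun k => |a k - a (k + r)|) := (hsa.sub hsar).abs
  have hsum1 : Summable (fun k => a k * T k) := by
    refine Summable.of_norm_bounded (hsa.mul_right (1 / |s2|)) fun k => ?_
    rw [Real.norm_eq_abs, abs_mul, abs_of_nonneg (ha0 k)]
    exact mul_le_mul_of_nonneg_left (hTb k) (ha0 k)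
  have hsum2 : Summable (fun k => a k * T' k) := by
    refine Summable.of_norm_bounded (hsa.mul_right (1 / |s2|)) fun k => ?_
    rw [Real.norm_eq_abs, abs_mul, abs_of_nonneg (ha0 k)]
    exact mul_le_mul_of_nonneg_left (hT'b k) (ha0 k)
  have hsum2' : Summable (fun k => a (k + r) * T k) := by
    refine Summable.of_norm_bounded (hsar.mul_right (1 / |s2|)) fun k => ?_
    rw [Real.norm_eq_abs, abs_mul, abs_of_nonneg (ha0 _)]
    exact mul_le_mul_of_nonneg_left (hTb k) (ha0 _)
  have hsumdT : Summable (fun k => (a k - a (k + r)) * T k) := by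
    have := hsum1.sub hsum2'
    simpa [sub_mul] using this
  -- shift identity for tsum
  have e2 : ∑' k, a k * T' k = ∑' k, a (k + r) * T k := by
    have hinj : Function.Injective (· + r : ℕ → ℕ) := add_left_injective r
    have hsupp : Function.support (fun k => a k * T' k) ⊆ Set.range (· + r : ℕ → ℕ) := by
      intro k hk
      by_contra hk'
      have hklt : k < r := by
        simp only [Set.mem_range] at hk'
        push_neg at hk'
        by_contra h
        exact hk' (k - r) (by omega)
      apply hk
      rw [hT'def]; simp [hklt]
    have := hinj.tsum_eq (f := fun k => a k * T' k) hsupp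
    rw [← this]
    refine tsum_congr fun k => ?_
    have : ¬ (k + r < r) := by omega
    simp only [hT'def, this, if_false, Nat.add_sub_cancel]
  -- the main tsum identity
  have e3 : ∑' k, a k * s k = ∑' k, (a k - a (k + r)) * T k := by
    calc ∑' k, a k * s k = ∑' k, (a k * T k - a k * T' k) := by
          refine tsum_congr fun k => ?_; rw [hrec k]; ring
      _ = (∑' k, a k * T k) - ∑' k, a k * T' k := Summable.tsum_sub hsum1 hsum2
      _ = (∑' k, a k * T k) - ∑' k, a (k + r) * T k := by rw [e2]
      _ = ∑' k, (a k - a (k + r)) * T k := by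
          rw [← Summable.tsum_sub hsum1 hsum2']
          refine tsum_congr fun k => ?_; ring
  set A : ℝ := ∑' k, |a k - a (k + r)| with hAdef
  set B : ℝ := ∑ k ∈ Finset.range r, a k with hBdef
  have hA0 : 0 ≤ A := tsum_nonneg fun k => abs_nonneg _
  have hB0 : 0 ≤ B := Finset.sum_nonneg fun k _ => ha0 k
  -- bound on the weighted sum of sines
  have hbound : |∑' k, a k * s k| ≤ A / |s2| := by
    rw [e3]
    have hnb : ∀ k, ‖(a k - a (k + r)) * T k‖ ≤ |a k - a (k + r)| * (1 / |s2|) := by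
      intro k
      rw [Real.norm_eq_abs, abs_mul]
      exact mul_le_mul_of_nonneg_left (hTb k) (abs_nonneg _)
    have hns : Summable (fun k => ‖(a k - a (k + r)) * T k‖) :=
      Summable.of_nonneg_of_le (fun k => norm_nonneg _) hnb (hd.mul_right _)
    have h1 : |∑' k, (a k - a (k + r)) * T k| ≤ ∑' k, ‖(a k - a (k + r)) * T k‖ :=
      norm_tsum_le_tsum_norm hns
    refine h1.trans ?_
    have h2 : ∑' k, ‖(a k - a (k + r)) * T k‖ ≤ ∑' k, |a k - a (k + r)| * (1 / |s2|) :=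
      Summable.tsum_le_tsum (h := hnb) hns (hd.mul_right _)
    refine h2.trans ?_
    rw [tsum_mul_right]
    exact le_of_eq (by rw [← hAdef, mul_one_div])
  -- rewrite the Dirichlet sum
  have hD : ∀ k : ℕ, a k * Dker k 1 t = (a k * s k) * (2 * s1)⁻¹ := by
    intro k
    rw [Dker, hsdef]
    push_cast
    rw [hs1def]
    rw [show (1:ℝ) * t / 2 = t / 2 by ring]
    ring
  have hDsum : ∑' k, a k * Dker k 1 t = (∑' k, a k * s k) * (2 * s1)⁻¹ := by
    rw [← tsum_mul_right]
    exact tsum_congr hD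
  -- first inequality
  have first : |∑' k : ℕ, a k * Dker k 1 t|
      ≤ (1 / (2 * |s1 * s2|)) * (A + B) := by
    rw [hDsum, abs_mul, abs_inv, abs_mul, abs_two]
    have h1 : |∑' k, a k * s k| * (2 * |s1|)⁻¹ ≤ (A / |s2|) * (2 * |s1|)⁻¹ :=
      mul_le_mul_of_nonneg_right hbound (by positivity)
    refine h1.trans ?_
    have h2 : (A / |s2|) * (2 * |s1|)⁻¹ = (1 / (2 * |s1 * s2|)) * A := by
      rw [abs_mul, one_div, div_eq_mul_inv, mul_inv]; ring
    rw [h2]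
    refine mul_le_mul_of_nonneg_left (by linarith) (by positivity)
  -- B ≤ A via telescoping
  have hdsum : Summable (fun k => a k - a (k + r)) := hsa.sub hsar
  have tele : ∀ N, r ≤ N → ∑ m ∈ Finset.range N, (a m - a (m + r))
      = B - ∑ i ∈ Finset.range r, a (N + i) := by
    intro N hN
    induction N, hN using Nat.le_induction with
    | base =>
      rw [Finset.sum_sub_distrib, hBdef]
      have : ∑ m ∈ Finset.range r, a (m + r) = ∑ i ∈ Finset.range r, a (r + i) := by
        refine Finset.sum_congr rfl fun i _ => by rw [add_comm]
      rw [this]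
    | succ N hN ih =>
      rw [Finset.sum_range_succ, ih]
      have h1 := Finset.sum_range_succ (fun i => a (N + i)) r
      have h2 := Finset.sum_range_succ' (fun i => a (N + i)) r
      have h3 : ∑ i ∈ Finset.range r, a (N + 1 + i) = ∑ i ∈ Finset.range r, a (N + (i + 1)) := by
        refine Finset.sum_congr rfl fun i _ => by rw [show N + 1 + i = N + (i + 1) by omega]
      simp only [Nat.add_zero] at h1 h2
      rw [h3]
      linarith
  have htail : Tendsto (fun N => ∑ i ∈ Finset.range r, a (N + i)) atTop (nhds 0) := by
    have : Tendsto (fun N => ∑ i ∈ Finset.range r, a (N + i)) atTop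
        (nhds (∑ i ∈ Finset.range r, (0:ℝ))) := by
      refine tendsto_finset_sum _ fun i _ => ?_
      exact halim.comp (tendsto_add_atTop_nat i)
    simpa using this
  have hdB : ∑' k, (a k - a (k + r)) = B := by
    refine tendsto_nhds_unique hdsum.hasSum.tendsto_sum_nat ?_
    have h1 : Tendsto (fun N => B - ∑ i ∈ Finset.range r, a (N + i)) atTop (nhds B) := by
      have := (tendsto_const_nhds (x := B) (f := atTop (α := ℕ))).sub htail
      simpa using this
    refine Tendsto.congr' ?_ h1
    filter_upwards [eventually_ge_atTop r] with N hN
    exact (tele N hN).symm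
  have hBA : B ≤ A := by
    rw [← hdB, hAdef]
    exact Summable.tsum_le_tsum (h := fun k => le_abs_self _) hdsum hd
  refine ⟨first, ?_⟩
  -- second inequality
  have hS : 0 < |s1 * s2| := by rw [abs_mul]; positivity
  have k2 : (1 / (2 * |s1 * s2|)) * (A + B) ≤ (1 / (2 * |s1 * s2|)) * (2 * A) :=
    mul_le_mul_of_nonneg_left (by linarith) (by positivity)
  refine k2.trans_eq ?_
  rw [one_div, div_eq_mul_inv, mul_inv]; ring
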